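/- Let K₁ := ℚ[Y]/(Y⁵ − Y + 1), the number field defined by the irreducible polynomial Y⁵ − Y + 1 over ℚ. Then the class number of K₁ equals 1. -/

import Mathlib

open Polynomial NumberField Module Matrix

set_option synthInstance.maxHeartbeats 400000 in
private lemma no_ideal_of_norm_prime' {K : Type*} [Field K] [NumberField K]
    (a : 𝓞 K) (ha : a ^ 5 - a + 1 = 0)
    {p : ℕ} (hp : p.Prime) (hroot : ∀ x : ZMod p, x ^ 5 - x + 1 ≠ 0)
    (I : Ideal (𝓞 K)) (hI : Ideal.absNorm I = p) : False := by
  have hcard : Nat.card (𝓞 K ⧸ I) = p := by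
    rwa [Ideal.absNorm_apply, Submodule.cardQuot_apply] at hI
  have hfin : Finite (𝓞 K ⧸ I) := Nat.finite_of_card_ne_zero (by rw [hcard]; exact hp.pos.ne')
  have : Fintype (𝓞 K ⧸ I) := Fintype.ofFinite _
  have hcard' : Fintype.card (𝓞 K ⧸ I) = p := by rwa [← Nat.card_eq_fintype_card]
  let E := ZMod.ringEquivOfPrime (𝓞 K ⧸ I) hp hcard'
  let ψ : 𝓞 K →+* ZMod p := (E.symm : (𝓞 K ⧸ I) →+* ZMod p).comp (Ideal.Quotient.mk I)
  refine hroot (ψ a) ?_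
  have h0 : ψ (a ^ 5 - a + 1) = 0 := by rw [ha, map_zero]
  simpa [map_add, map_sub, map_pow, _root_.map_one] using h0

private lemma fin_det_2869 :
    (!![(-1 : ℚ),-5,0,0,0; 0,4,-5,0,0; 0,0,4,-5,0; 0,0,0,4,-5; 5,0,0,0,4]).det = 2869 := by
  simp [Matrix.det_succ_row_zero, Fin.sum_univ_succ, Fin.succAbove]
  norm_num

set_option maxHeartbeats 1000000 in
/-- The number field `K₁ = ℚ[Y]/(Y⁵ − Y + 1)` has class number 1. -/
theorem stmt6 (K : Type*) [Field K] [NumberField K]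
    (e : K ≃ₐ[ℚ] AdjoinRoot (X ^ 5 - X + 1 : ℚ[X])) :
    NumberField.classNumber K = 1 := by
  classical
  -- basic facts about f
  have hfirr : Irreducible (X ^ 5 - X + 1 : ℚ[X]) := by
    have hg : Irreducible (X ^ 5 - X - 1 : ℚ[X]) :=
      X_pow_sub_X_sub_one_irreducible_rat (by norm_num)
    let φ : ℚ[X] →ₐ[ℚ] ℚ[X] := aeval (-X)
    have hφφ : φ.comp φ = AlgHom.id ℚ ℚ[X] := by
      apply Polynomial.algHom_ext; simp [φ]
    let E : ℚ[X] ≃ₐ[ℚ] ℚ[X] := AlgEquiv.ofAlgHom φ φ hφφ hφφ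
    have h1 : Irreducible (E (X ^ 5 - X - 1)) := (MulEquiv.irreducible_iff E).mpr hg
    have h2 : E (X ^ 5 - X - 1) = -1 * (X ^ 5 - X + 1 : ℚ[X]) := by
      show φ _ = _
      simp [φ, map_sub, map_pow]; ring
    rwa [h2, irreducible_isUnit_mul (isUnit_one.neg)] at h1
  have hmonic : (X ^ 5 - X + 1 : ℚ[X]).Monic := by monicity!
  have hdeg : (X ^ 5 - X + 1 : ℚ[X]).natDegree = 5 := by compute_degree!
  have hf0 : (X ^ 5 - X + 1 : ℚ[X]) ≠ 0 := hfirr.ne_zero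
  -- power basis
  let pb : PowerBasis ℚ K := (AdjoinRoot.powerBasis hf0).map e.symm
  let α : K := e.symm (AdjoinRoot.root (X ^ 5 - X + 1 : ℚ[X]))
  have hgen : pb.gen = α := by
    simp only [pb, PowerBasis.map_gen, AdjoinRoot.powerBasis_gen]
    rfl
  have haev : aeval α (X ^ 5 - X + 1 : ℚ[X]) = 0 := by
    show aeval (e.symm (AdjoinRoot.root _)) _ = 0
    rw [aeval_algHom_apply e.symm (AdjoinRoot.root _)]
    rw [AdjoinRoot.aeval_eq, AdjoinRoot.mk_self, map_zero]
  have hmin : minpoly ℚ α = X ^ 5 - X + 1 :=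
    (minpoly.eq_of_irreducible_of_monic hfirr haev hmonic).symm
  have hdim : pb.dim = 5 := hdeg
  have hrank : finrank ℚ K = 5 := by rw [pb.finrank, hdim]
  have hα5 : α ^ 5 = α - 1 := by
    have h := haev
    simp only [map_add, map_sub, map_pow, aeval_X, _root_.map_one] at h
    linear_combination h
  -- the reindexed basis
  let bb : Basis (Fin 5) ℚ K := pb.basis.reindex (finCongr hdim)
  have hbb : ∀ i : Fin 5, bb i = α ^ (i : ℕ) := by
    intro i
    simp only [bb, Basis.reindex_apply, pb.coe_basis, ← hgen]
    congr 1
  have b0 : bb 0 = 1 := by rw [hbb]; norm_num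
  have b1 : bb 1 = α := by rw [hbb]; norm_num
  have b2 : bb 2 = α ^ 2 := by rw [hbb]; norm_num
  have b3 : bb 3 = α ^ 3 := by rw [hbb, show ((3 : Fin 5) : ℕ) = 3 from rfl]
  have b4 : bb 4 = α ^ 4 := by rw [hbb, show ((4 : Fin 5) : ℕ) = 4 from rfl]
  -- β = f'(α)
  let β : K := 5 * α ^ 4 - 1
  have hβ_def : β = 5 * α ^ 4 - 1 := rfl
  -- left multiplication matrix of β
  have hM : Algebra.leftMulMatrix bb β =
      !![-1,-5,0,0,0; 0,4,-5,0,0; 0,0,4,-5,0; 0,0,0,4,-5; 5,0,0,0,4] := by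
    have c0 : β * bb 0 = (-1 : ℚ) • bb 0 + (5 : ℚ) • bb 4 := by
      rw [b0, b4, Algebra.smul_def, Algebra.smul_def]
      simp only [map_neg, _root_.map_one, map_ofNat]
      rw [hβ_def]; ring
    have c1 : β * bb 1 = (-5 : ℚ) • bb 0 + (4 : ℚ) • bb 1 := by
      rw [b0, b1, Algebra.smul_def, Algebra.smul_def]
      simp only [map_neg, _root_.map_one, map_ofNat]
      rw [hβ_def]; linear_combination (5 : K) * hα5
    have c2 : β * bb 2 = (-5 : ℚ) • bb 1 + (4 : ℚ) • bb 2 := by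
      rw [b1, b2, Algebra.smul_def, Algebra.smul_def]
      simp only [map_neg, _root_.map_one, map_ofNat]
      rw [hβ_def]; linear_combination (5 : K) * α * hα5
    have c3 : β * bb 3 = (-5 : ℚ) • bb 2 + (4 : ℚ) • bb 3 := by
      rw [b2, b3, Algebra.smul_def, Algebra.smul_def]
      simp only [map_neg, _root_.map_one, map_ofNat]
      rw [hβ_def]; linear_combination (5 : K) * α ^ 2 * hα5
    have c4 : β * bb 4 = (-5 : ℚ) • bb 3 + (4 : ℚ) • bb 4 := by
      rw [b3, b4, Algebra.smul_def, Algebra.smul_def]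
      simp only [map_neg, _root_.map_one, map_ofNat]
      rw [hβ_def]; linear_combination (5 : K) * α ^ 3 * hα5
    ext i j
    rw [Algebra.leftMulMatrix_eq_repr_mul]
    fin_cases j
    · rw [show (⟨0, by norm_num⟩ : Fin 5) = 0 from rfl, c0]
      simp only [map_add, _root_.map_smul, Basis.repr_self, Finsupp.coe_add, Finsupp.coe_smul,
        Pi.add_apply, Pi.smul_apply, smul_eq_mul]
      fin_cases i <;> simp [Finsupp.single_apply, Matrix.vecHead, Matrix.vecTail]
    · rw [show (⟨1, by norm_num⟩ : Fin 5) = 1 from rfl, c1]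
      simp only [map_add, _root_.map_smul, Basis.repr_self, Finsupp.coe_add, Finsupp.coe_smul,
        Pi.add_apply, Pi.smul_apply, smul_eq_mul]
      fin_cases i <;> simp [Finsupp.single_apply, Matrix.vecHead, Matrix.vecTail]
    · rw [show (⟨2, by norm_num⟩ : Fin 5) = 2 from rfl, c2]
      simp only [map_add, _root_.map_smul, Basis.repr_self, Finsupp.coe_add, Finsupp.coe_smul,
        Pi.add_apply, Pi.smul_apply, smul_eq_mul]
      fin_cases i <;> simp [Finsupp.single_apply, Matrix.vecHead, Matrix.vecTail]
    · rw [show (⟨3, by norm_num⟩ : Fin 5) = 3 from rfl, c3]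
      simp only [map_add, _root_.map_smul, Basis.repr_self, Finsupp.coe_add, Finsupp.coe_smul,
        Pi.add_apply, Pi.smul_apply, smul_eq_mul]
      fin_cases i <;> simp [Finsupp.single_apply, Matrix.vecHead, Matrix.vecTail]
    · rw [show (⟨4, by norm_num⟩ : Fin 5) = 4 from rfl, c4]
      simp only [map_add, _root_.map_smul, Basis.repr_self, Finsupp.coe_add, Finsupp.coe_smul,
        Pi.add_apply, Pi.smul_apply, smul_eq_mul]
      fin_cases i <;> simp [Finsupp.single_apply, Matrix.vecHead, Matrix.vecTail]
  -- norm of β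
  have hnorm : Algebra.norm ℚ β = 2869 := by
    rw [Algebra.norm_eq_matrix_det bb, hM, fin_det_2869]
  -- discriminant of the power basis
  have hDpb : Algebra.discr ℚ (⇑pb.basis) = 2869 := by
    rw [Algebra.discr_powerBasis_eq_norm, hrank]
    have hd : derivative (minpoly ℚ pb.gen) = C (5 : ℚ) * X ^ 4 - 1 := by
      rw [hgen, hmin]
      simp [derivative_X_pow]
      rw [← C_1, ← C_add]; norm_num
    rw [hd]
    have hev : aeval pb.gen (C (5 : ℚ) * X ^ 4 - 1) = β := by
      rw [hgen]
      simp [hβ_def, map_ofNat]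
    rw [hev, hnorm]
    norm_num
  have hDbb : Algebra.discr ℚ (⇑bb) = 2869 := by
    have h := Algebra.discr_reindex (A := ℚ) (B := K) pb.basis (finCongr hdim)
    rw [← h] at hDpb
    show Algebra.discr ℚ ⇑(pb.basis.reindex (finCongr hdim)) = 2869
    rw [Basis.coe_reindex]
    exact hDpb
  -- α is integral
  have hint : IsIntegral ℤ α := by
    refine ⟨X ^ 5 - X + 1, by monicity!, ?_⟩
    simp only [eval₂_add, eval₂_sub, eval₂_pow, eval₂_X, eval₂_one]
    rw [hα5]; ring
  let a : 𝓞 K := ⟨α, hint⟩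
  have ha_coe : algebraMap (𝓞 K) K a = α := rfl
  have ha : a ^ 5 - a + 1 = 0 := by
    apply RingOfIntegers.coe_injective
    rw [map_add, map_sub, map_pow, _root_.map_one, map_zero]
    show α ^ 5 - α + 1 = 0
    rw [hα5]; ring
  -- bound the discriminant
  have habs : |NumberField.discr K| ≤ 2869 := by
    set ι₀ := Free.ChooseBasisIndex ℤ (𝓞 K) with hι₀
    let eqv2 : ι₀ ≃ Fin 5 := (integralBasis K).indexEquiv bb
    let b'' : ι₀ → K := ⇑bb ∘ ⇑eqv2
    have h3 : Algebra.discr ℚ b'' = Algebra.discr ℚ ⇑bb := by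
      have h := Algebra.discr_reindex (A := ℚ) (B := K) bb eqv2.symm
      simpa using h
    set P : Matrix ι₀ ι₀ ℚ := (integralBasis K).toMatrix b'' with hP_def
    have h1 : (⇑(integralBasis K) ᵥ* (P.map (algebraMap ℚ K))) = b'' :=
      (integralBasis K).toMatrix_map_vecMul b''
    have h2 : Algebra.discr ℚ b'' = P.det ^ 2 * Algebra.discr ℚ ⇑(integralBasis K) := by
      conv_lhs => rw [← h1]
      exact Algebra.discr_of_matrix_vecMul (⇑(integralBasis K)) P
    have hPint : ∀ i j, IsIntegral ℤ (P i j) := by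
      intro i j
      rw [hP_def, Basis.toMatrix_apply]
      have hb'' : b'' j = algebraMap (𝓞 K) K (a ^ ((eqv2 j : Fin 5) : ℕ)) := by
        simp only [b'', Function.comp_apply, hbb, map_pow, ha_coe]
      rw [hb'', integralBasis_repr_apply]
      exact isIntegral_algebraMap
    obtain ⟨r, hr⟩ := IsIntegrallyClosed.isIntegral_iff.1
      (IsIntegral.det (fun i j => hPint i j))
    have hQ : (2869 : ℚ) = (r : ℚ) ^ 2 * ((NumberField.discr K : ℤ) : ℚ) := by
      rw [← hDbb, ← h3, h2, NumberField.coe_discr, ← hr]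
      norm_num
    have hZ : (2869 : ℤ) = r ^ 2 * NumberField.discr K := by exact_mod_cast hQ
    have hdvd : NumberField.discr K ∣ 2869 := Dvd.intro_left _ hZ.symm
    exact Int.le_of_dvd (by norm_num) ((abs_dvd _ _).mpr hdvd)
  -- Minkowski bound
  rw [NumberField.classNumber, Fintype.card_eq_one_iff]
  refine ⟨1, fun C => ?_⟩
  obtain ⟨I, rfl, hI⟩ := exists_ideal_in_class_of_norm_le C
  rw [hrank] at hI
  have hπ : (3.141592 : ℝ) < Real.pi := Real.pi_gt_d6
  have hsqrt : Real.sqrt |(NumberField.discr K : ℝ)| ≤ 54 := by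
    rw [show (54 : ℝ) = Real.sqrt (54 ^ 2) from (Real.sqrt_sq (by norm_num)).symm]
    apply Real.sqrt_le_sqrt
    rw [← Int.cast_abs]
    have h54 : ((|NumberField.discr K| : ℤ) : ℝ) ≤ (2869 : ℝ) := by exact_mod_cast habs
    linarith
  have hs2 : NumberField.InfinitePlace.nrComplexPlaces K ≤ 2 := by
    have h := NumberField.InfinitePlace.card_add_two_mul_card_eq_rank K
    rw [hrank] at h
    omega
  have hpow : (4 / Real.pi) ^ NumberField.InfinitePlace.nrComplexPlaces K
      ≤ (4 / Real.pi) ^ 2 := by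
    apply pow_le_pow_right₀ _ hs2
    rw [le_div_iff₀ Real.pi_pos]
    linarith [Real.pi_le_four]
  have hbound : ((Ideal.absNorm (I : Ideal (𝓞 K)) : ℕ) : ℝ) < 4 := by
    refine lt_of_le_of_lt hI ?_
    have hfac : ((Nat.factorial 5 : ℕ) : ℝ) = 120 := by norm_num [Nat.factorial]
    have h55 : ((5 : ℕ) : ℝ) ^ (5 : ℕ) = 3125 := by norm_num
    calc (4 / Real.pi) ^ NumberField.InfinitePlace.nrComplexPlaces K *
          (((Nat.factorial 5 : ℕ) : ℝ) / ((5 : ℕ) : ℝ) ^ (5 : ℕ) *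
            Real.sqrt |(NumberField.discr K : ℝ)|)
        ≤ (4 / Real.pi) ^ 2 * ((120 : ℝ) / 3125 * 54) := by
          rw [hfac, h55]
          apply mul_le_mul hpow ?_ (by positivity) (by positivity)
          apply mul_le_mul le_rfl hsqrt (Real.sqrt_nonneg _) (by norm_num)
      _ < 4 := by
          rw [div_pow, div_mul_eq_mul_div, div_lt_iff₀ (by positivity)]
          nlinarith [Real.pi_pos]
  have hnorm_ne : Ideal.absNorm (I : Ideal (𝓞 K)) ≠ 0 :=
    Ideal.absNorm_ne_zero_of_nonZeroDivisors I
  have h4 : Ideal.absNorm (I : Ideal (𝓞 K)) < 4 := by exact_mod_cast hbound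
  have htri : Ideal.absNorm (I : Ideal (𝓞 K)) = 1 ∨ Ideal.absNorm (I : Ideal (𝓞 K)) = 2 ∨
      Ideal.absNorm (I : Ideal (𝓞 K)) = 3 := by omega
  rcases htri with h | h | h
  · rw [ClassGroup.mk0_eq_one_iff, Ideal.absNorm_eq_one_iff.mp h]
    exact top_isPrincipal
  · exact absurd h (fun h => no_ideal_of_norm_prime' a ha Nat.prime_two (by decide) _ h)
  · exact absurd h (fun h => no_ideal_of_norm_prime' a ha Nat.prime_three (by decide) _ h)
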